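/- Let x ≥ 121 and 0 < h ≤ (5/6)x be reals. Assume ψ(t) - θ(t) ≤ (1 + 10⁻⁶)√t + 3·t^(1/3) for all t ≥ 0 and ψ(t) - θ(t) ≥ 0.998684·√t for all t ≥ 121, where ψ and θ are the Chebyshev functions. Then [ψ(x+h) - θ(x+h)] - [ψ(x-h) - θ(x-h)] ≤ 0.95·√x + 3.7·x^(1/3). -/

import Mathlib

/-- Chebyshev `ψ(t) = Σ_{n ≤ t} Λ(n)`. -/
noncomputable def chebyshevPsi (t : ℝ) : ℝ :=
  ∑ n ∈ Finset.Icc 1 ⌊t⌋₊, ArithmeticFunction.vonMangoldt n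

/-- Chebyshev `θ(t) = Σ_{p ≤ t} log p`. -/
noncomputable def chebyshevTheta (t : ℝ) : ℝ :=
  ∑ p ∈ (Finset.Icc 1 ⌊t⌋₊).filter Nat.Prime, Real.log p

open ArithmeticFunction Finset

lemma ppdb_diff_eq (t : ℝ) : chebyshevPsi t - chebyshevTheta t
    = ∑ n ∈ (Finset.Icc 1 ⌊t⌋₊).filter (fun n => ¬ n.Prime), Λ n := by
  have h : chebyshevTheta t = ∑ n ∈ (Finset.Icc 1 ⌊t⌋₊).filter Nat.Prime, Λ n :=
    Finset.sum_congr rfl (fun p hp => (vonMangoldt_apply_prime (Finset.mem_filter.mp hp).2).symm)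
  rw [chebyshevPsi, h, ← Finset.sum_filter_add_sum_filter_not (Finset.Icc 1 ⌊t⌋₊) Nat.Prime Λ]
  ring

lemma ppdb_mono {s t : ℝ} (h : ⌊s⌋₊ ≤ ⌊t⌋₊) :
    chebyshevPsi s - chebyshevTheta s ≤ chebyshevPsi t - chebyshevTheta t := by
  rw [ppdb_diff_eq, ppdb_diff_eq]
  apply Finset.sum_le_sum_of_subset_of_nonneg
  · exact Finset.filter_subset_filter _ (Finset.Icc_subset_Icc le_rfl h)
  · intros; exact vonMangoldt_nonneg

lemma ppdb_lower (t : ℝ) (F : Finset ℕ)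
    (hF : F ⊆ (Finset.Icc 1 ⌊t⌋₊).filter (fun n => ¬ n.Prime)) :
    ∑ n ∈ F, Λ n ≤ chebyshevPsi t - chebyshevTheta t := by
  rw [ppdb_diff_eq]
  exact Finset.sum_le_sum_of_subset_of_nonneg hF (fun _ _ _ => vonMangoldt_nonneg)

lemma ppdb_small_primes : ∀ q ∈ Finset.Icc 2 36, q.Prime →
    q ∈ ({2,3,5,7,11,13,17,19,23,29,31} : Finset ℕ) := by decide

lemma ppdb_upper (N : ℕ) (LF : Finset ℕ)
    (key : ∀ p ∈ ({2,3,5,7,11,13,17,19,23,29,31} : Finset ℕ), ∀ k ∈ Finset.Icc 2 10,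
      N < p ^ k ∨ p ^ k ∈ LF)
    (hN : N ≤ 1330) :
    chebyshevPsi N - chebyshevTheta N ≤ ∑ n ∈ LF, Λ n := by
  rw [ppdb_diff_eq, Nat.floor_natCast]
  rw [← Finset.sum_filter_add_sum_filter_not
    ((Finset.Icc 1 N).filter (fun n => ¬ n.Prime)) (· ∈ LF) Λ]
  have h2 : ∑ n ∈ (((Finset.Icc 1 N).filter (fun n => ¬ n.Prime)).filter
      (fun n => ¬ (n ∈ LF))), Λ n = 0 := by
    apply Finset.sum_eq_zero
    intro n hn
    simp only [Finset.mem_filter, Finset.mem_Icc] at hn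
    obtain ⟨⟨⟨hn1, hnN⟩, hnp⟩, hnL⟩ := hn
    by_contra h0
    obtain ⟨p, k, hp, hk, hpk⟩ := vonMangoldt_ne_zero_iff.mp h0
    have hpp : p.Prime := hp.nat_prime
    have hk2 : 2 ≤ k := by
      by_contra hlt
      push_neg at hlt
      have hk1 : k = 1 := by omega
      subst hk1
      rw [pow_one] at hpk
      exact hnp (hpk ▸ hpp)
    have h2k : 2 ^ k ≤ n := hpk ▸ Nat.pow_le_pow_left hpp.two_le k
    have hk10 : k ≤ 10 := by
      by_contra hgt
      push_neg at hgt
      have : 2 ^ 11 ≤ 2 ^ k := Nat.pow_le_pow_right (by norm_num) hgt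
      omega
    have hp2 : p ^ 2 ≤ n := hpk ▸ Nat.pow_le_pow_right hpp.pos hk2
    have hple : p ≤ 36 := by nlinarith
    have hpmem := ppdb_small_primes p (Finset.mem_Icc.mpr ⟨hpp.two_le, hple⟩) hpp
    rcases key p hpmem k (Finset.mem_Icc.mpr ⟨hk2, hk10⟩) with hbig | hmem
    · omega
    · exact hnL (hpk ▸ hmem)
  rw [h2, add_zero]
  apply Finset.sum_le_sum_of_subset_of_nonneg
  · intro n hn
    exact (Finset.mem_filter.mp hn).2
  · intros; exact vonMangoldt_nonneg


lemma ppdb_log_le {p : ℕ} {y : ℝ} (hy : 0 ≤ y) (hp : 0 < p)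
    (h : (p : ℝ) ≤ (1 + y / 16) ^ (16 : ℕ)) : Real.log p ≤ y := by
  rw [Real.log_le_iff_le_exp (by exact_mod_cast hp)]
  calc (p : ℝ) ≤ (1 + y / 16) ^ (16 : ℕ) := h
    _ ≤ Real.exp (y / 16) ^ (16 : ℕ) := by
        apply pow_le_pow_left₀ (by positivity)
        linarith [Real.add_one_le_exp (y / 16)]
    _ = Real.exp y := by rw [← Real.exp_nat_mul]; ring_nf

lemma ppdb_lb2 : (0.6931 : ℝ) ≤ Real.log 2 := le_of_lt (by linarith [Real.log_two_gt_d9])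
lemma ppdb_ub2 : Real.log 2 ≤ 0.6932 := le_of_lt (by linarith [Real.log_two_lt_d9])
lemma ppdb_lb3 : (1 : ℝ) ≤ Real.log 3 := by
  have := (Real.lt_log_iff_exp_lt (by norm_num : (0:ℝ) < 3)).mpr
    (by linarith [Real.exp_one_lt_d9] : Real.exp 1 < 3)
  linarith
lemma ppdb_ub3 : Real.log 3 ≤ 1.15 := ppdb_log_le (by norm_num) (by norm_num) (by norm_num)
lemma ppdb_lb5 : (1.3862 : ℝ) ≤ Real.log 5 := by
  have h4 : Real.log 4 ≤ Real.log 5 := Real.log_le_log (by norm_num) (by norm_num)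
  have : Real.log 4 = 2 * Real.log 2 := by
    rw [show (4:ℝ) = 2 ^ (2:ℕ) by norm_num, Real.log_pow]; norm_num
  linarith [ppdb_lb2]
lemma ppdb_ub5 : Real.log 5 ≤ 1.72 := ppdb_log_le (by norm_num) (by norm_num) (by norm_num)
lemma ppdb_ub7 : Real.log 7 ≤ 2.1 := ppdb_log_le (by norm_num) (by norm_num) (by norm_num)
lemma ppdb_ub11 : Real.log 11 ≤ 2.6 := ppdb_log_le (by norm_num) (by norm_num) (by norm_num)
lemma ppdb_ub13 : Real.log 13 ≤ 2.8 := ppdb_log_le (by norm_num) (by norm_num) (by norm_num)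
lemma ppdb_ub17 : Real.log 17 ≤ 3.15 := ppdb_log_le (by norm_num) (by norm_num) (by norm_num)
lemma ppdb_ub19 : Real.log 19 ≤ 3.25 := ppdb_log_le (by norm_num) (by norm_num) (by norm_num)
lemma ppdb_ub23 : Real.log 23 ≤ 3.5 := ppdb_log_le (by norm_num) (by norm_num) (by norm_num)
lemma ppdb_ub29 : Real.log 29 ≤ 3.8 := ppdb_log_le (by norm_num) (by norm_num) (by norm_num)
lemma ppdb_ub31 : Real.log 31 ≤ 3.85 := ppdb_log_le (by norm_num) (by norm_num) (by norm_num)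

lemma ppdb_rpow3_le {c x : ℝ} (hc : 0 ≤ c) (h : c ^ (3:ℕ) ≤ x) : c ≤ x ^ ((1:ℝ)/3) := by
  have h0 : (0:ℝ) ≤ x := le_trans (by positivity) h
  have h1 : ((c ^ (3:ℕ) : ℝ)) ^ ((1:ℝ)/3) ≤ x ^ ((1:ℝ)/3) :=
    Real.rpow_le_rpow (by positivity) h (by norm_num)
  rwa [← Real.rpow_natCast c 3, ← Real.rpow_mul hc, show ((3:ℕ):ℝ) * (1/3) = 1 by norm_num,
    Real.rpow_one] at h1

lemma ppdb_rpow3_ge {c x : ℝ} (hc : 0 ≤ c) (hx : 0 ≤ x) (h : x ≤ c ^ (3:ℕ)) :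
    x ^ ((1:ℝ)/3) ≤ c := by
  have h1 : x ^ ((1:ℝ)/3) ≤ ((c ^ (3:ℕ) : ℝ)) ^ ((1:ℝ)/3) :=
    Real.rpow_le_rpow hx h (by norm_num)
  rwa [← Real.rpow_natCast c 3, ← Real.rpow_mul hc, show ((3:ℕ):ℝ) * (1/3) = 1 by norm_num,
    Real.rpow_one] at h1


lemma ppdb_lam4 : Λ 4 = Real.log 2 := by
  rw [show (4:ℕ) = 2 ^ 2 by norm_num, vonMangoldt_apply_pow (by norm_num), vonMangoldt_apply_prime (by norm_num)]
  norm_cast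
lemma ppdb_lam8 : Λ 8 = Real.log 2 := by
  rw [show (8:ℕ) = 2 ^ 3 by norm_num, vonMangoldt_apply_pow (by norm_num), vonMangoldt_apply_prime (by norm_num)]
  norm_cast
lemma ppdb_lam9 : Λ 9 = Real.log 3 := by
  rw [show (9:ℕ) = 3 ^ 2 by norm_num, vonMangoldt_apply_pow (by norm_num), vonMangoldt_apply_prime (by norm_num)]
  norm_cast
lemma ppdb_lam16 : Λ 16 = Real.log 2 := by
  rw [show (16:ℕ) = 2 ^ 4 by norm_num, vonMangoldt_apply_pow (by norm_num), vonMangoldt_apply_prime (by norm_num)]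
  norm_cast
lemma ppdb_lam25 : Λ 25 = Real.log 5 := by
  rw [show (25:ℕ) = 5 ^ 2 by norm_num, vonMangoldt_apply_pow (by norm_num), vonMangoldt_apply_prime (by norm_num)]
  norm_cast
lemma ppdb_lam27 : Λ 27 = Real.log 3 := by
  rw [show (27:ℕ) = 3 ^ 3 by norm_num, vonMangoldt_apply_pow (by norm_num), vonMangoldt_apply_prime (by norm_num)]
  norm_cast
lemma ppdb_lam32 : Λ 32 = Real.log 2 := by
  rw [show (32:ℕ) = 2 ^ 5 by norm_num, vonMangoldt_apply_pow (by norm_num), vonMangoldt_apply_prime (by norm_num)]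
  norm_cast
lemma ppdb_lam49 : Λ 49 = Real.log 7 := by
  rw [show (49:ℕ) = 7 ^ 2 by norm_num, vonMangoldt_apply_pow (by norm_num), vonMangoldt_apply_prime (by norm_num)]
  norm_cast
lemma ppdb_lam64 : Λ 64 = Real.log 2 := by
  rw [show (64:ℕ) = 2 ^ 6 by norm_num, vonMangoldt_apply_pow (by norm_num), vonMangoldt_apply_prime (by norm_num)]
  norm_cast
lemma ppdb_lam81 : Λ 81 = Real.log 3 := by
  rw [show (81:ℕ) = 3 ^ 4 by norm_num, vonMangoldt_apply_pow (by norm_num), vonMangoldt_apply_prime (by norm_num)]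
  norm_cast
lemma ppdb_lam121 : Λ 121 = Real.log 11 := by
  rw [show (121:ℕ) = 11 ^ 2 by norm_num, vonMangoldt_apply_pow (by norm_num), vonMangoldt_apply_prime (by norm_num)]
  norm_cast
lemma ppdb_lam125 : Λ 125 = Real.log 5 := by
  rw [show (125:ℕ) = 5 ^ 3 by norm_num, vonMangoldt_apply_pow (by norm_num), vonMangoldt_apply_prime (by norm_num)]
  norm_cast
lemma ppdb_lam128 : Λ 128 = Real.log 2 := by
  rw [show (128:ℕ) = 2 ^ 7 by norm_num, vonMangoldt_apply_pow (by norm_num), vonMangoldt_apply_prime (by norm_num)]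
  norm_cast
lemma ppdb_lam169 : Λ 169 = Real.log 13 := by
  rw [show (169:ℕ) = 13 ^ 2 by norm_num, vonMangoldt_apply_pow (by norm_num), vonMangoldt_apply_prime (by norm_num)]
  norm_cast
lemma ppdb_lam243 : Λ 243 = Real.log 3 := by
  rw [show (243:ℕ) = 3 ^ 5 by norm_num, vonMangoldt_apply_pow (by norm_num), vonMangoldt_apply_prime (by norm_num)]
  norm_cast
lemma ppdb_lam256 : Λ 256 = Real.log 2 := by
  rw [show (256:ℕ) = 2 ^ 8 by norm_num, vonMangoldt_apply_pow (by norm_num), vonMangoldt_apply_prime (by norm_num)]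
  norm_cast
lemma ppdb_lam289 : Λ 289 = Real.log 17 := by
  rw [show (289:ℕ) = 17 ^ 2 by norm_num, vonMangoldt_apply_pow (by norm_num), vonMangoldt_apply_prime (by norm_num)]
  norm_cast
lemma ppdb_lam343 : Λ 343 = Real.log 7 := by
  rw [show (343:ℕ) = 7 ^ 3 by norm_num, vonMangoldt_apply_pow (by norm_num), vonMangoldt_apply_prime (by norm_num)]
  norm_cast
lemma ppdb_lam361 : Λ 361 = Real.log 19 := by
  rw [show (361:ℕ) = 19 ^ 2 by norm_num, vonMangoldt_apply_pow (by norm_num), vonMangoldt_apply_prime (by norm_num)]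
  norm_cast
lemma ppdb_lam512 : Λ 512 = Real.log 2 := by
  rw [show (512:ℕ) = 2 ^ 9 by norm_num, vonMangoldt_apply_pow (by norm_num), vonMangoldt_apply_prime (by norm_num)]
  norm_cast
lemma ppdb_lam529 : Λ 529 = Real.log 23 := by
  rw [show (529:ℕ) = 23 ^ 2 by norm_num, vonMangoldt_apply_pow (by norm_num), vonMangoldt_apply_prime (by norm_num)]
  norm_cast
lemma ppdb_lam625 : Λ 625 = Real.log 5 := by
  rw [show (625:ℕ) = 5 ^ 4 by norm_num, vonMangoldt_apply_pow (by norm_num), vonMangoldt_apply_prime (by norm_num)]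
  norm_cast
lemma ppdb_lam729 : Λ 729 = Real.log 3 := by
  rw [show (729:ℕ) = 3 ^ 6 by norm_num, vonMangoldt_apply_pow (by norm_num), vonMangoldt_apply_prime (by norm_num)]
  norm_cast
lemma ppdb_lam841 : Λ 841 = Real.log 29 := by
  rw [show (841:ℕ) = 29 ^ 2 by norm_num, vonMangoldt_apply_pow (by norm_num), vonMangoldt_apply_prime (by norm_num)]
  norm_cast
lemma ppdb_lam961 : Λ 961 = Real.log 31 := by
  rw [show (961:ℕ) = 31 ^ 2 by norm_num, vonMangoldt_apply_pow (by norm_num), vonMangoldt_apply_prime (by norm_num)]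
  norm_cast
lemma ppdb_lam1024 : Λ 1024 = Real.log 2 := by
  rw [show (1024:ℕ) = 2 ^ 10 by norm_num, vonMangoldt_apply_pow (by norm_num), vonMangoldt_apply_prime (by norm_num)]
  norm_cast

lemma ppdb_sum513 : ∑ n ∈ ({4,8,9,16,25,27,32,49,64,81,121,125,128,169,243,256,289,343,361,512} : Finset ℕ), Λ n = 8 * Real.log 2 + 4 * Real.log 3 + 2 * Real.log 5 + 2 * Real.log 7 + Real.log 11 + Real.log 13 + Real.log 17 + Real.log 19 := by
  rw [Finset.sum_insert (by decide), Finset.sum_insert (by decide), Finset.sum_insert (by decide), Finset.sum_insert (by decide), Finset.sum_insert (by decide), Finset.sum_insert (by decide), Finset.sum_insert (by decide), Finset.sum_insert (by decide), Finset.sum_insert (by decide), Finset.sum_insert (by decide), Finset.sum_insert (by decide), Finset.sum_insert (by decide), Finset.sum_insert (by decide), Finset.sum_insert (by decide), Finset.sum_insert (by decide), Finset.sum_insert (by decide), Finset.sum_insert (by decide), Finset.sum_insert (by decide), Finset.sum_insert (by decide), Finset.sum_singleton]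
  rw [ppdb_lam4, ppdb_lam8, ppdb_lam9, ppdb_lam16, ppdb_lam25, ppdb_lam27, ppdb_lam32, ppdb_lam49, ppdb_lam64, ppdb_lam81, ppdb_lam121, ppdb_lam125, ppdb_lam128, ppdb_lam169, ppdb_lam243, ppdb_lam256, ppdb_lam289, ppdb_lam343, ppdb_lam361, ppdb_lam512]
  ring
lemma ppdb_sum1330 : ∑ n ∈ ({4,8,9,16,25,27,32,49,64,81,121,125,128,169,243,256,289,343,361,512,529,625,729,841,961,1024} : Finset ℕ), Λ n = 9 * Real.log 2 + 5 * Real.log 3 + 3 * Real.log 5 + 2 * Real.log 7 + Real.log 11 + Real.log 13 + Real.log 17 + Real.log 19 + Real.log 23 + Real.log 29 + Real.log 31 := by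
  rw [Finset.sum_insert (by decide), Finset.sum_insert (by decide), Finset.sum_insert (by decide), Finset.sum_insert (by decide), Finset.sum_insert (by decide), Finset.sum_insert (by decide), Finset.sum_insert (by decide), Finset.sum_insert (by decide), Finset.sum_insert (by decide), Finset.sum_insert (by decide), Finset.sum_insert (by decide), Finset.sum_insert (by decide), Finset.sum_insert (by decide), Finset.sum_insert (by decide), Finset.sum_insert (by decide), Finset.sum_insert (by decide), Finset.sum_insert (by decide), Finset.sum_insert (by decide), Finset.sum_insert (by decide), Finset.sum_insert (by decide), Finset.sum_insert (by decide), Finset.sum_insert (by decide), Finset.sum_insert (by decide), Finset.sum_insert (by decide), Finset.sum_insert (by decide), Finset.sum_singleton]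
  rw [ppdb_lam4, ppdb_lam8, ppdb_lam9, ppdb_lam16, ppdb_lam25, ppdb_lam27, ppdb_lam32, ppdb_lam49, ppdb_lam64, ppdb_lam81, ppdb_lam121, ppdb_lam125, ppdb_lam128, ppdb_lam169, ppdb_lam243, ppdb_lam256, ppdb_lam289, ppdb_lam343, ppdb_lam361, ppdb_lam512, ppdb_lam529, ppdb_lam625, ppdb_lam729, ppdb_lam841, ppdb_lam961, ppdb_lam1024]
  ring


theorem prime_power_diff_bound (x h : ℝ) (hx : 121 ≤ x) (hh : 0 < h) (hhx : h ≤ 5 / 6 * x)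
    (hub : ∀ t : ℝ, 0 ≤ t →
      chebyshevPsi t - chebyshevTheta t ≤ (1 + 10 ^ (-(6:ℤ))) * Real.sqrt t + 3 * t ^ ((1:ℝ)/3))
    (hlb : ∀ t : ℝ, 121 ≤ t → 0.998684 * Real.sqrt t ≤ chebyshevPsi t - chebyshevTheta t) :
    (chebyshevPsi (x + h) - chebyshevTheta (x + h))
        - (chebyshevPsi (x - h) - chebyshevTheta (x - h))
      ≤ 0.95 * Real.sqrt x + 3.7 * x ^ ((1:ℝ)/3) := by
  have hx0 : (0:ℝ) ≤ x := by linarith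
  have hs : 0 ≤ Real.sqrt x := Real.sqrt_nonneg x
  have hs3 : 0 ≤ x ^ ((1:ℝ)/3) := Real.rpow_nonneg hx0 _
  have hxh0 : (0:ℝ) ≤ x + h := by linarith
  by_cases hA : 121 ≤ x - h
  · -- both points in range of the analytic bounds
    have h1 := hub (x + h) (by linarith)
    have h2 := hlb (x - h) hA
    have hε : ((10:ℝ) ^ (-(6:ℤ)) : ℝ) = 1/1000000 := by norm_num
    rw [hε] at h1
    have ha2 : Real.sqrt (11/6) ^ 2 = 11/6 := Real.sq_sqrt (by norm_num)
    have hb2 : Real.sqrt (1/6) ^ 2 = 1/6 := Real.sq_sqrt (by norm_num)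
    have ha0 : 0 ≤ Real.sqrt (11/6) := Real.sqrt_nonneg _
    have hb0 : 0 ≤ Real.sqrt (1/6) := Real.sqrt_nonneg _
    have ha : Real.sqrt (11/6) ≤ 1.35401 := by nlinarith
    have hb : (0.4082:ℝ) ≤ Real.sqrt (1/6) := by nlinarith
    have e1 : Real.sqrt (x + h) ≤ Real.sqrt (11/6) * Real.sqrt x := by
      rw [← Real.sqrt_mul (by norm_num : (0:ℝ) ≤ 11/6) x]
      exact Real.sqrt_le_sqrt (by linarith)
    have e2 : Real.sqrt (1/6) * Real.sqrt x ≤ Real.sqrt (x - h) := by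
      rw [← Real.sqrt_mul (by norm_num : (0:ℝ) ≤ 1/6) x]
      exact Real.sqrt_le_sqrt (by linarith)
    have hq : ((11:ℝ)/6) ^ ((1:ℝ)/3) ≤ 1.2266 :=
      ppdb_rpow3_ge (by norm_num) (by norm_num) (by norm_num)
    have e3 : (x + h) ^ ((1:ℝ)/3) ≤ 1.2266 * x ^ ((1:ℝ)/3) := by
      have e4 : (x + h) ^ ((1:ℝ)/3) ≤ ((11/6) * x) ^ ((1:ℝ)/3) :=
        Real.rpow_le_rpow (by linarith) (by linarith) (by norm_num)
      rw [Real.mul_rpow (by norm_num) hx0] at e4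
      nlinarith
    have p1 : Real.sqrt (11/6) * Real.sqrt x ≤ 1.35401 * Real.sqrt x :=
      mul_le_mul_of_nonneg_right ha hs
    have p2 : 0.4082 * Real.sqrt x ≤ Real.sqrt (1/6) * Real.sqrt x :=
      mul_le_mul_of_nonneg_right hb hs
    linarith
  · -- x - h < 121, so x < 726 ; use explicit prime-power computations
    push_neg at hA
    have hx726 : x < 726 := by linarith
    have hfloor16 : (16:ℕ) ≤ ⌊x - h⌋₊ := Nat.le_floor (by push_cast; linarith)
    by_cases hC : x < 280
    · -- 121 ≤ x < 280
      have key1 : ∀ p ∈ ({2,3,5,7,11,13,17,19,23,29,31} : Finset ℕ),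
          ∀ k ∈ Finset.Icc 2 10, 513 < p ^ k ∨
          p ^ k ∈ ({4,8,9,16,25,27,32,49,64,81,121,125,128,169,243,256,289,343,361,512} :
            Finset ℕ) := by decide
      have hfup : ⌊x + h⌋₊ ≤ 513 := by
        have : ⌊x + h⌋₊ < 514 := (Nat.floor_lt hxh0).mpr (by push_cast; linarith)
        omega
      have hup : chebyshevPsi (x+h) - chebyshevTheta (x+h)
          ≤ chebyshevPsi ((513:ℕ):ℝ) - chebyshevTheta ((513:ℕ):ℝ) :=
        ppdb_mono (by rw [Nat.floor_natCast]; exact hfup)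
      have hup2 := ppdb_upper 513 _ key1 (by norm_num)
      rw [ppdb_sum513] at hup2
      have hsub : ({4,8,9,16} : Finset ℕ)
          ⊆ (Finset.Icc 1 ⌊x-h⌋₊).filter (fun n => ¬ n.Prime) := by
        intro n hn
        simp only [Finset.mem_insert, Finset.mem_singleton] at hn
        simp only [Finset.mem_filter, Finset.mem_Icc]
        rcases hn with rfl | rfl | rfl | rfl <;>
          exact ⟨⟨by norm_num, by omega⟩, by norm_num⟩
      have hlow := ppdb_lower (x-h) _ hsub
      have hlsum : ∑ n ∈ ({4,8,9,16} : Finset ℕ), Λ n = 3 * Real.log 2 + Real.log 3 := by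
        rw [Finset.sum_insert (by decide), Finset.sum_insert (by decide),
          Finset.sum_insert (by decide), Finset.sum_singleton,
          ppdb_lam4, ppdb_lam8, ppdb_lam9, ppdb_lam16]
        ring
      rw [hlsum] at hlow
      have hsx : (11:ℝ) ≤ Real.sqrt x := by
        rw [show (11:ℝ) = Real.sqrt (11^2) from (Real.sqrt_sq (by norm_num)).symm]
        exact Real.sqrt_le_sqrt (by norm_num; linarith)
      have hc1 : (4.94:ℝ) ≤ x ^ ((1:ℝ)/3) := by
        apply ppdb_rpow3_le (by norm_num)
        norm_num
        linarith
      linarith [ppdb_lb2, ppdb_lb3, ppdb_ub2, ppdb_ub3, ppdb_ub5, ppdb_ub7,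
        ppdb_ub11, ppdb_ub13, ppdb_ub17, ppdb_ub19]
    · -- 280 ≤ x < 726
      push_neg at hC
      have key2 : ∀ p ∈ ({2,3,5,7,11,13,17,19,23,29,31} : Finset ℕ),
          ∀ k ∈ Finset.Icc 2 10, 1330 < p ^ k ∨
          p ^ k ∈ ({4,8,9,16,25,27,32,49,64,81,121,125,128,169,243,256,289,343,361,512,529,625,729,841,961,1024} :
            Finset ℕ) := by decide
      have hfup : ⌊x + h⌋₊ ≤ 1330 := by
        have : ⌊x + h⌋₊ < 1331 := (Nat.floor_lt hxh0).mpr (by push_cast; linarith)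
        omega
      have hup : chebyshevPsi (x+h) - chebyshevTheta (x+h)
          ≤ chebyshevPsi ((1330:ℕ):ℝ) - chebyshevTheta ((1330:ℕ):ℝ) :=
        ppdb_mono (by rw [Nat.floor_natCast]; exact hfup)
      have hup2 := ppdb_upper 1330 _ key2 (by norm_num)
      rw [ppdb_sum1330] at hup2
      have hfloor46 : (32:ℕ) ≤ ⌊x - h⌋₊ := Nat.le_floor (by push_cast; linarith)
      have hsub : ({4,8,9,16,25,27,32} : Finset ℕ)
          ⊆ (Finset.Icc 1 ⌊x-h⌋₊).filter (fun n => ¬ n.Prime) := by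
        intro n hn
        simp only [Finset.mem_insert, Finset.mem_singleton] at hn
        simp only [Finset.mem_filter, Finset.mem_Icc]
        rcases hn with rfl | rfl | rfl | rfl | rfl | rfl | rfl <;>
          exact ⟨⟨by norm_num, by omega⟩, by norm_num⟩
      have hlow := ppdb_lower (x-h) _ hsub
      have hlsum : ∑ n ∈ ({4,8,9,16,25,27,32} : Finset ℕ), Λ n
          = 4 * Real.log 2 + 2 * Real.log 3 + Real.log 5 := by
        rw [Finset.sum_insert (by decide), Finset.sum_insert (by decide),
          Finset.sum_insert (by decide), Finset.sum_insert (by decide),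
          Finset.sum_insert (by decide), Finset.sum_insert (by decide),
          Finset.sum_singleton,
          ppdb_lam4, ppdb_lam8, ppdb_lam9, ppdb_lam16, ppdb_lam25, ppdb_lam27, ppdb_lam32]
        ring
      rw [hlsum] at hlow
      have hsx : (16.73:ℝ) ≤ Real.sqrt x := by
        rw [show (16.73:ℝ) = Real.sqrt (16.73^2) from (Real.sqrt_sq (by norm_num)).symm]
        exact Real.sqrt_le_sqrt (by norm_num; linarith)
      have hc1 : (6.54:ℝ) ≤ x ^ ((1:ℝ)/3) := by
        apply ppdb_rpow3_le (by norm_num)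
        norm_num
        linarith
      linarith [ppdb_lb2, ppdb_lb3, ppdb_lb5, ppdb_ub2, ppdb_ub3, ppdb_ub5, ppdb_ub7,
        ppdb_ub11, ppdb_ub13, ppdb_ub17, ppdb_ub19, ppdb_ub23, ppdb_ub29, ppdb_ub31]
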